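/- Let P be a nonsymmetric operad with multiplication π. The map D : P_n → P_{n+1}, D(f) := −ι_π f, is a graded derivation for the cup bracket: D[f,g]_π = [D(f), g]_π + (-1)^m [f, D(g)]_π for f ∈ P_m, g ∈ P_n. Moreover D² = 0, so (P_•, [·,·]_π, D) is a differential graded Lie algebra. -/

import Mathlib

/-- A nonsymmetric operad (in "arity minus one" indexing: `Q n` is the space of
operations of arity `n + 1`, i.e. the space `P_{n+1}` of the paper), given by a
collection of `k`-modules with partial compositions
`∘ᵢ : P_{m+1} × P_{n+1} → P_{m+n+1}` (here `i : Fin (m+1)` is the 0-based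
position), satisfying the sequential and parallel associativity axioms and
unit axioms.  The target degree is a free variable `p` constrained by
`m + n = p`, which avoids dependent-type casts in the axioms. -/
structure NSOperad (k : Type*) [Field k] (Q : ℕ → Type*)
    [∀ n, AddCommGroup (Q n)] [∀ n, Module k (Q n)] where
  comp : ∀ {m n p : ℕ}, m + n = p → Q m → Fin (m + 1) → Q n → Q p
  comp_add_left : ∀ {m n p : ℕ} (h : m + n = p) (f f' : Q m) (i : Fin (m + 1)) (g : Q n),
    comp h (f + f') i g = comp h f i g + comp h f' i g
  comp_add_right : ∀ {m n p : ℕ} (h : m + n = p) (f : Q m) (i : Fin (m + 1)) (g g' : Q n),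
    comp h f i (g + g') = comp h f i g + comp h f i g'
  comp_smul_left : ∀ {m n p : ℕ} (h : m + n = p) (a : k) (f : Q m) (i : Fin (m + 1)) (g : Q n),
    comp h (a • f) i g = a • comp h f i g
  comp_smul_right : ∀ {m n p : ℕ} (h : m + n = p) (a : k) (f : Q m) (i : Fin (m + 1)) (g : Q n),
    comp h f i (a • g) = a • comp h f i g
  one : Q 0
  comp_one : ∀ {m : ℕ} (f : Q m) (i : Fin (m + 1)), comp (Nat.add_zero m) f i one = f
  one_comp : ∀ {m : ℕ} (f : Q m), comp (Nat.zero_add m) one 0 f = f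
  assoc_seq : ∀ {m n l q r p : ℕ} (h0 : n + l = q) (h1 : m + q = p) (h2 : m + n = r)
    (h3 : r + l = p) (f : Q m) (g : Q n) (hh : Q l) (i : Fin (m + 1)) (j : Fin (n + 1)),
    comp h1 f i (comp h0 g j hh) =
      comp h3 (comp h2 f i g) ⟨(i : ℕ) + (j : ℕ), by have := i.isLt; have := j.isLt; omega⟩ hh
  assoc_par : ∀ {m n l r s p : ℕ} (h2 : m + n = r) (h3 : r + l = p) (h4 : m + l = s)
    (h5 : s + n = p) (f : Q m) (g : Q n) (hh : Q l) (i j : Fin (m + 1)), (i : ℕ) < (j : ℕ) →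
    comp h3 (comp h2 f i g) ⟨(j : ℕ) + n, by have := j.isLt; omega⟩ hh =
      comp h5 (comp h4 f j hh) ⟨(i : ℕ), by have := i.isLt; omega⟩ g

namespace NSOperad

variable {k : Type*} [Field k] {Q : ℕ → Type*}
  [∀ n, AddCommGroup (Q n)] [∀ n, Module k (Q n)]

/-- Transport along an equality of degrees. -/
def tr {i j : ℕ} (h : i = j) (x : Q i) : Q j := h ▸ x

variable (O : NSOperad k Q)

/-- The contraction operator `ι_g f := Σᵢ (-1)^{(i-1)(n-1)} f ∘ᵢ g`
(for `f ∈ P_{m+1}`, `g ∈ P_{n+1}` in paper degrees). -/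
def iota {m n : ℕ} (g : Q n) (f : Q m) : Q (m + n) :=
  ∑ i : Fin (m + 1), ((-1 : k) ^ ((i : ℕ) * n)) • O.comp rfl f i g

/-- `π ∈ P_2` is a multiplication if `π ∘₁ π = π ∘₂ π`. -/
def IsMult (π : Q 1) : Prop := O.comp rfl π 0 π = O.comp rfl π 1 π

/-- The Gerstenhaber–Voronov bracket `[f,g]_GV = ι_f g − (-1)^{mn} ι_g f`. -/
def gv {m n : ℕ} (f : Q m) (g : Q n) : Q (m + n) :=
  tr (by omega : n + m = m + n) (O.iota f g) - ((-1 : k) ^ (m * n)) • O.iota g f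

/-- The differential `δ_π f := −[π, f]_GV`. -/
def delta (π : Q 1) {n : ℕ} (f : Q n) : Q (n + 1) :=
  - tr (by omega : 1 + n = n + 1) (O.gv π f)

/-- The map `θ f := −ι_f π`. -/
def theta (π : Q 1) {n : ℕ} (f : Q n) : Q (n + 1) :=
  - tr (by omega : 1 + n = n + 1) (O.iota f π)

/-- The map `D f := −ι_π f`. -/
def Dop (π : Q 1) {n : ℕ} (f : Q n) : Q (n + 1) := - O.iota π f

/-- The cup product `f ∪_π g := (π ∘₂ g) ∘₁ f`. -/
def cup (π : Q 1) {m n : ℕ} (f : Q m) (g : Q n) : Q (m + n + 1) :=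
  O.comp (by omega : (1 + n) + m = m + n + 1) (O.comp rfl π 1 g) 0 f

/-- The cup bracket `[f,g]_π := f ∪_π g − (-1)^{(m+1)(n+1)} g ∪_π f`
(paper degrees `m+1`, `n+1`). -/
def cupBracket (π : Q 1) {m n : ℕ} (f : Q m) (g : Q n) : Q (m + n + 1) :=
  O.cup π f g - ((-1 : k) ^ ((m + 1) * (n + 1))) •
    tr (by omega : n + m + 1 = m + n + 1) (O.cup π g f)

/-- The Frölicher–Nijenhuis bracket
`[f,g]_FN := [f,g]_π + (-1)^{m+1} ι_{δ_π f} g − (-1)^{(m+2)(n+1)} ι_{δ_π g} f`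
(paper degrees `m+1`, `n+1`). -/
def fn (π : Q 1) {m n : ℕ} (f : Q m) (g : Q n) : Q (m + n + 1) :=
  O.cupBracket π f g
    + ((-1 : k) ^ (m + 1)) •
        tr (by omega : n + (m + 1) = m + n + 1) (O.iota (O.delta π f) g)
    - ((-1 : k) ^ ((m + 2) * (n + 1))) •
        tr (by omega : m + (n + 1) = m + n + 1) (O.iota (O.delta π g) f)

/-- The derived bracket
`[f,g]_D := [f,g]_π + ι_{θ f} g − (-1)^{(m+1)(n+1)} ι_{θ g} f`. -/
def derived (π : Q 1) {m n : ℕ} (f : Q m) (g : Q n) : Q (m + n + 1) :=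
  O.cupBracket π f g
    + tr (by omega : n + (m + 1) = m + n + 1) (O.iota (O.theta π f) g)
    - ((-1 : k) ^ ((m + 1) * (n + 1))) •
        tr (by omega : m + (n + 1) = m + n + 1) (O.iota (O.theta π g) f)

/-- The deformed element `π_S := π ∘₁ S + π ∘₂ S − S ∘₁ π` for `S ∈ P_1`. -/
def piDef (π : Q 1) (S : Q 0) : Q 1 :=
  O.comp rfl π 0 S + O.comp rfl π 1 S - O.comp rfl S 0 π

/-- `S ∈ P_1` is a Nijenhuis element for the multiplication `π`:
`(π ∘₂ S) ∘₁ S = S ∘₁ (π ∘₁ S + π ∘₂ S − S ∘₁ π)`. -/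
def IsNijenhuisFor (π : Q 1) (S : Q 0) : Prop :=
  O.comp rfl (O.comp rfl π 1 S) 0 S = O.comp rfl S 0 (O.piDef π S)

/-- Powers `N^j := N ∘₁ N^{j-1}`, `N^0 = 𝟙`. -/
def Npow (N : Q 0) : ℕ → Q 0
  | 0 => O.one
  | (j + 1) => O.comp (rfl : (0 : ℕ) + 0 = 0) N 0 (Npow N j)

/-- `R ∈ P_1` is a Rota–Baxter element of weight `lam`:
`(π ∘₂ R) ∘₁ R = R ∘₁ (π ∘₁ R + π ∘₂ R + lam π)`. -/
def IsRB (π : Q 1) (lam : k) (R : Q 0) : Prop :=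
  O.comp rfl (O.comp rfl π 1 R) 0 R =
    O.comp rfl R 0 (O.comp rfl π 0 R + O.comp rfl π 1 R + lam • π)

/-- `r ∈ P_1` is an averaging element:
`(π ∘₂ r) ∘₁ r = r ∘₁ (π ∘₁ r) = r ∘₁ (π ∘₂ r)`. -/
def IsAvg (π : Q 1) (r : Q 0) : Prop :=
  O.comp rfl (O.comp rfl π 1 r) 0 r = O.comp rfl r 0 (O.comp rfl π 0 r) ∧
  O.comp rfl (O.comp rfl π 1 r) 0 r = O.comp rfl r 0 (O.comp rfl π 1 r)


/-! ### Auxiliary lemmas -/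

set_option linter.unusedSectionVars false

section AuxTr

variable {k : Type*} [Field k] {Q : ℕ → Type*}
  [∀ n, AddCommGroup (Q n)] [∀ n, Module k (Q n)] (O : NSOperad k Q)

theorem tr_trans {i j l : ℕ} (e : i = j) (e' : j = l) (x : Q i) :
    tr e' (tr e x) = tr (e.trans e') x := by subst e; subst e'; rfl

theorem tr_add' {i j : ℕ} (e : i = j) (x y : Q i) :
    tr e (x + y) = tr e x + tr e y := by subst e; rfl

theorem tr_sub' {i j : ℕ} (e : i = j) (x y : Q i) :
    tr e (x - y) = tr e x - tr e y := by subst e; rfl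

theorem tr_neg' {i j : ℕ} (e : i = j) (x : Q i) :
    tr e (-x) = - tr e x := by subst e; rfl

theorem tr_smul' {i j : ℕ} (e : i = j) (a : k) (x : Q i) :
    tr e (a • x) = a • tr e x := by subst e; rfl

theorem tr_sum' {α : Type*} {i j : ℕ} (e : i = j) (s : Finset α) (x : α → Q i) :
    tr e (∑ a ∈ s, x a) = ∑ a ∈ s, tr e (x a) := by subst e; rfl

theorem tr_comp' {m n p p' : ℕ} (e : p = p') (h : m + n = p) (f : Q m)
    (i : Fin (m + 1)) (g : Q n) :
    tr e (O.comp h f i g) = O.comp (h.trans e) f i g := by subst e; rfl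

theorem comp_index_congr {m n p : ℕ} (h h' : m + n = p) (f : Q m)
    {i i' : Fin (m + 1)} (e : (i : ℕ) = (i' : ℕ)) (g : Q n) :
    O.comp h f i g = O.comp h' f i' g := by
  obtain rfl : i = i' := Fin.ext e; rfl

theorem comp_zero_right {m n p : ℕ} (h : m + n = p) (f : Q m) (i : Fin (m + 1)) :
    O.comp h f i (0 : Q n) = 0 := by
  have h0 := O.comp_add_right h f i 0 0
  rw [add_zero] at h0
  exact (left_eq_add.mp h0)

theorem comp_zero_left {m n p : ℕ} (h : m + n = p) (i : Fin (m + 1)) (g : Q n) :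
    O.comp h (0 : Q m) i g = 0 := by
  have h0 := O.comp_add_left h 0 0 i g
  rw [add_zero] at h0
  exact (left_eq_add.mp h0)

/-- `comp` in the right argument as an additive monoid hom. -/
def compRight {m n p : ℕ} (h : m + n = p) (f : Q m) (i : Fin (m + 1)) : Q n →+ Q p where
  toFun g := O.comp h f i g
  map_zero' := O.comp_zero_right h f i
  map_add' g g' := O.comp_add_right h f i g g'

/-- `comp` in the left argument as an additive monoid hom. -/
def compLeft {m n p : ℕ} (h : m + n = p) (i : Fin (m + 1)) (g : Q n) : Q m →+ Q p where
  toFun f := O.comp h f i g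
  map_zero' := O.comp_zero_left h i g
  map_add' f f' := O.comp_add_left h f f' i g

theorem comp_neg_right {m n p : ℕ} (h : m + n = p) (f : Q m) (i : Fin (m + 1)) (g : Q n) :
    O.comp h f i (-g) = - O.comp h f i g := (O.compRight h f i).map_neg g

theorem comp_neg_left {m n p : ℕ} (h : m + n = p) (f : Q m) (i : Fin (m + 1)) (g : Q n) :
    O.comp h (-f) i g = - O.comp h f i g := (O.compLeft h i g).map_neg f

theorem comp_sum_right {α : Type*} {m n p : ℕ} (h : m + n = p) (f : Q m) (i : Fin (m + 1))
    (s : Finset α) (g : α → Q n) :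
    O.comp h f i (∑ a ∈ s, g a) = ∑ a ∈ s, O.comp h f i (g a) :=
  map_sum (O.compRight h f i) g s

theorem comp_sum_left {α : Type*} {m n p : ℕ} (h : m + n = p) (i : Fin (m + 1))
    (g : Q n) (s : Finset α) (f : α → Q m) :
    O.comp h (∑ a ∈ s, f a) i g = ∑ a ∈ s, O.comp h (f a) i g :=
  map_sum (O.compLeft h i g) f s

theorem neg_one_pow_sub_two_mul (a b c : ℕ) (h : a = b + 2 * c) :
    ((-1 : k)) ^ a = (-1 : k) ^ b := by
  subst h; rw [pow_add, pow_mul, neg_one_sq, one_pow, mul_one]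

end AuxTr

section DopSq
set_option linter.unusedSectionVars false
set_option linter.unusedTactic false
set_option linter.unreachableTactic false
set_option linter.unnecessarySeqFocus false
variable {k : Type*} [Field k] {Q : ℕ → Type*}
  [∀ n, AddCommGroup (Q n)] [∀ n, Module k (Q n)] (O : NSOperad k Q)

theorem Dop_Dop (π : Q 1) (hπ : O.IsMult π) {n : ℕ} (f : Q n) :
    O.Dop π (O.Dop π f) = 0 := by
  unfold Dop iota
  simp only [mul_one, comp_neg_left, comp_sum_left, comp_smul_left, smul_neg, neg_neg,
    Finset.sum_neg_distrib, Finset.smul_sum, smul_smul, ← pow_add, neg_eq_zero]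
  -- helper : consecutive signs cancel
  have key : ∀ a b : ℕ, (a = b + 1 ∨ b = a + 1) → ((-1 : k) ^ a + (-1 : k) ^ b) = 0 := by
    rintro a b (rfl | rfl) <;> rw [pow_succ] <;> ring
  have v0 : ((0 : Fin (1 + 1)) : ℕ) = 0 := rfl
  have v1 : ((1 : Fin (1 + 1)) : ℕ) = 1 := rfl
  -- helper from sequential associativity and the multiplication axiom
  have hseq : ∀ (a : Fin (n + 1)) (i j : Fin (n + 1 + 1)), (i : ℕ) = (a : ℕ) →
      (j : ℕ) = (a : ℕ) + 1 →
      O.comp rfl (O.comp rfl f a π) i π = O.comp rfl (O.comp rfl f a π) j π := by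
    intro a i j hi hj
    have e0 := O.assoc_seq rfl rfl rfl rfl f π π a (0 : Fin (1 + 1))
    have e1 := O.assoc_seq rfl rfl rfl rfl f π π a (1 : Fin (1 + 1))
    calc O.comp rfl (O.comp rfl f a π) i π
        = O.comp rfl (O.comp rfl f a π) ⟨(a : ℕ) + ((0 : Fin (1+1)) : ℕ), by
            have := a.isLt; omega⟩ π := O.comp_index_congr _ _ _ (by show (i:ℕ) = (a:ℕ) + 0; omega) _
      _ = O.comp rfl f a (O.comp rfl π (0 : Fin (1+1)) π) := e0.symm
      _ = O.comp rfl f a (O.comp rfl π (1 : Fin (1+1)) π) := by rw [hπ]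
      _ = O.comp rfl (O.comp rfl f a π) ⟨(a : ℕ) + ((1 : Fin (1+1)) : ℕ), by
            have := a.isLt; omega⟩ π := e1
      _ = O.comp rfl (O.comp rfl f a π) j π :=
          O.comp_index_congr _ _ _ (by show (a:ℕ) + 1 = (j:ℕ); omega) _
  -- helper from parallel associativity
  have hpar : ∀ (a b : Fin (n + 1)) (i j : Fin (n + 1 + 1)), (a : ℕ) < (b : ℕ) →
      (i : ℕ) = (b : ℕ) + 1 → (j : ℕ) = (a : ℕ) →
      O.comp rfl (O.comp rfl f a π) i π = O.comp rfl (O.comp rfl f b π) j π := by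
    intro a b i j hab hi hj
    have e := O.assoc_par rfl rfl rfl rfl f π π a b hab
    calc O.comp rfl (O.comp rfl f a π) i π
        = O.comp rfl (O.comp rfl f a π) ⟨(b : ℕ) + 1, by have := b.isLt; omega⟩ π :=
          O.comp_index_congr _ _ _ (by simpa using hi) _
      _ = O.comp rfl (O.comp rfl f b π) ⟨(a : ℕ), by have := a.isLt; omega⟩ π := e
      _ = O.comp rfl (O.comp rfl f b π) j π := O.comp_index_congr _ _ _ (by simpa using hj.symm) _
  have main : ∑ p ∈ (Finset.univ ×ˢ Finset.univ : Finset (Fin (n + 1 + 1) × Fin (n + 1))),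
      ((-1 : k) ^ ((p.1 : ℕ) + (p.2 : ℕ)) • O.comp rfl (O.comp rfl f p.2 π) p.1 π) = 0 := by
    refine Finset.sum_involution
      (fun p _ => if h : (p.1 : ℕ) ≤ (p.2 : ℕ) then
          (⟨(p.2 : ℕ) + 1, by have := p.2.isLt; omega⟩, ⟨(p.1 : ℕ), by have := p.2.isLt; omega⟩)
        else
          (⟨(p.2 : ℕ), by have := p.2.isLt; omega⟩, ⟨(p.1 : ℕ) - 1, by have := p.1.isLt; omega⟩))
      ?_ ?_ (fun p _ => Finset.mem_univ _) ?_
    · -- cancellation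
      rintro ⟨i, j⟩ -
      beta_reduce
      by_cases hle : (i : ℕ) ≤ (j : ℕ)
      · rw [dif_pos hle]
        simp only
        rcases eq_or_lt_of_le hle with heq | hlt
        · -- i = j : the hπ pair
          have E := hseq j i ⟨(j : ℕ) + 1, by have := j.isLt; omega⟩ heq rfl
          have hj' : (⟨(i : ℕ), by have := j.isLt; omega⟩ : Fin (n + 1)) = j := Fin.ext heq
          rw [hj', E, ← add_smul, key _ _ (by first | omega | (simp; omega) | simp), zero_smul]
        · -- i < j : parallel pair
          have E := hpar ⟨(i : ℕ), by omega⟩ j ⟨(j : ℕ) + 1, by have := j.isLt; omega⟩ i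
            (by simpa using hlt) rfl rfl
          rw [← E, ← add_smul, key _ _ (by first | omega | (simp; omega) | simp), zero_smul]
      · rw [dif_neg hle]
        simp only
        push_neg at hle
        rcases eq_or_lt_of_le (Nat.succ_le_of_lt hle) with heq | hlt
        · -- i = j + 1 : the hπ pair
          have E := hseq j ⟨(j : ℕ), by have := j.isLt; omega⟩ i rfl (by omega)
          have hj' : (⟨(i : ℕ) - 1, by have := i.isLt; omega⟩ : Fin (n + 1)) = j :=
            Fin.ext (by first | omega | (simp; omega) | simp)
          rw [hj', ← E, ← add_smul, key _ _ (by first | omega | (simp; omega) | simp), zero_smul]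
        · -- i > j + 1 : parallel pair
          have E := hpar j ⟨(i : ℕ) - 1, by have := i.isLt; omega⟩ i
            ⟨(j : ℕ), by have := j.isLt; omega⟩ (by first | omega | (simp; omega) | simp) (by first | omega | (simp; omega) | simp) rfl
          rw [E, ← add_smul, key _ _ (by first | omega | (simp; omega) | simp), zero_smul]
    · -- no fixed points
      rintro ⟨i, j⟩ - -
      beta_reduce
      intro hgp
      by_cases hle : (i : ℕ) ≤ (j : ℕ) <;>
        [rw [dif_pos hle] at hgp; rw [dif_neg hle] at hgp] <;>
      · have h1 := congrArg (fun q : Fin (n+1+1) × Fin (n+1) => ((q.1 : ℕ), (q.2 : ℕ))) hgp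
        simp at h1
        omega
    · -- involutive
      rintro ⟨i, j⟩ -
      beta_reduce
      by_cases hle : (i : ℕ) ≤ (j : ℕ)
      · rw [dif_pos hle]
        beta_reduce
        rw [dif_neg (by first | omega | (simp; omega) | simp)]
        ext <;> simp <;> omega
      · rw [dif_neg hle]
        beta_reduce
        rw [dif_pos (by first | omega | (simp; omega) | simp)]
        ext <;> simp <;> omega
  rw [Finset.sum_product] at main
  convert main using 2

end DopSq

section DopCup
set_option linter.unusedSectionVars false
set_option linter.unusedTactic false
set_option linter.unreachableTactic false
variable {k : Type*} [Field k] {Q : ℕ → Type*}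
  [∀ n, AddCommGroup (Q n)] [∀ n, Module k (Q n)] (O : NSOperad k Q)

theorem Dop_cup (π : Q 1) {m n : ℕ} (f : Q m) (g : Q n) :
    O.Dop π (O.cup π f g) =
      tr (by ring : (m + 1) + n + 1 = m + n + 1 + 1) (O.cup π (O.Dop π f) g) +
        ((-1 : k) ^ (m + 1)) •
          tr (by ring : m + (n + 1) + 1 = m + n + 1 + 1) (O.cup π f (O.Dop π g)) := by
  unfold Dop cup iota
  rw [tr_comp' O, tr_comp' O]
  simp only [mul_one, comp_neg_left, comp_neg_right, comp_sum_left, comp_sum_right,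
    comp_smul_left, comp_smul_right, smul_neg, neg_neg, Finset.sum_neg_distrib,
    Finset.smul_sum, smul_smul, ← pow_add]
  rw [← neg_add, neg_inj]
  have esum : (m + 1) + (n + 1) = m + n + 1 + 1 := by omega
  rw [← Fin.sum_congr' _ esum, Fin.sum_univ_add]
  congr 1
  · refine Finset.sum_congr rfl fun i _ => ?_
    have hv : ((Fin.cast esum (Fin.castAdd (n + 1) i)) : ℕ) = (i : ℕ) := by simp
    rw [hv]
    congr 1
    have E := O.assoc_seq rfl (by omega : (1 + n) + (m + 1) = m + n + 1 + 1)
      (by omega : (1 + n) + m = m + n + 1) (by omega) (O.comp rfl π 1 g) f π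
      (0 : Fin (1 + n + 1)) i
    rw [E]
    exact O.comp_index_congr _ _ _ (by simp) _
  · refine Finset.sum_congr rfl fun j _ => ?_
    have hv : ((Fin.cast esum (Fin.natAdd (m + 1) j)) : ℕ) = m + 1 + (j : ℕ) := by simp
    rw [hv]
    congr 1
    have E1 := O.assoc_par (by omega : (1 + n) + m = m + n + 1)
      (by omega : (m + n + 1) + 1 = m + n + 1 + 1) (by omega : (1 + n) + 1 = 1 + (n + 1))
      (by omega : (1 + (n + 1)) + m = m + n + 1 + 1) (O.comp rfl π 1 g) f π
      (0 : Fin (1 + n + 1)) (⟨(j : ℕ) + 1, by have := j.isLt; omega⟩ : Fin (1 + n + 1))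
      (by simp)
    have E2 := O.assoc_seq rfl (rfl : 1 + (n + 1) = 1 + (n + 1)) rfl
      (by omega : (1 + n) + 1 = 1 + (n + 1)) π g π (1 : Fin (1 + 1)) j
    calc O.comp rfl (O.comp (by omega) (O.comp rfl π 1 g) 0 f)
            (Fin.cast esum (Fin.natAdd (m + 1) j)) π
        = O.comp (by omega) (O.comp (by omega) (O.comp rfl π 1 g) 0 f)
            ⟨((⟨(j : ℕ) + 1, by have := j.isLt; omega⟩ : Fin (1 + n + 1)) : ℕ) + m, by
              have := j.isLt; omega⟩ π :=
          O.comp_index_congr _ _ _ (by simp; omega) _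
      _ = O.comp (by omega) (O.comp (by omega : (1 + n) + 1 = 1 + (n + 1)) (O.comp rfl π 1 g)
            ⟨(j : ℕ) + 1, by have := j.isLt; omega⟩ π)
            ⟨((0 : Fin (1 + n + 1)) : ℕ), by omega⟩ f := E1
      _ = O.comp (by omega) (O.comp (by omega : (1 + n) + 1 = 1 + (n + 1)) (O.comp rfl π 1 g)
            ⟨((1 : Fin (1 + 1)) : ℕ) + (j : ℕ), by have := j.isLt; omega⟩ π)
            ⟨((0 : Fin (1 + n + 1)) : ℕ), by omega⟩ f := by
          congr 1
          exact O.comp_index_congr _ _ _ (by simp; omega) _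
      _ = O.comp (by omega) (O.comp rfl π 1 (O.comp rfl g j π)) 0 f := by
          rw [E2]
          exact O.comp_index_congr _ _ _ (by simp) _

end DopCup

section DopLin
set_option linter.unusedSectionVars false
variable {k : Type*} [Field k] {Q : ℕ → Type*}
  [∀ n, AddCommGroup (Q n)] [∀ n, Module k (Q n)] (O : NSOperad k Q)

theorem comp_sub_left {m n p : ℕ} (h : m + n = p) (f f' : Q m) (i : Fin (m + 1)) (g : Q n) :
    O.comp h (f - f') i g = O.comp h f i g - O.comp h f' i g :=
  (O.compLeft h i g).map_sub f f'

theorem Dop_sub (π : Q 1) {n : ℕ} (x y : Q n) :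
    O.Dop π (x - y) = O.Dop π x - O.Dop π y := by
  unfold Dop iota
  simp only [comp_sub_left, smul_sub, Finset.sum_sub_distrib, neg_sub]
  abel

theorem Dop_smul (π : Q 1) {n : ℕ} (a : k) (x : Q n) :
    O.Dop π (a • x) = a • O.Dop π x := by
  unfold Dop iota
  have hc : ∀ (i : ℕ) (X : Q (n + 1)), ((-1 : k) ^ i) • a • X = a • ((-1 : k) ^ i) • X :=
    fun i X => smul_comm _ _ _
  simp only [comp_smul_left, hc, ← Finset.smul_sum, smul_neg]

theorem Dop_tr (π : Q 1) {a b : ℕ} (e : a = b) (x : Q a) :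
    O.Dop π (tr e x) = tr (by rw [e] : a + 1 = b + 1) (O.Dop π x) := by
  subst e; rfl

end DopLin

end NSOperad

open NSOperad

theorem Dop_derivation_of_cup_bracket {k : Type*} [Field k] {Q : ℕ → Type*}
    [∀ n, AddCommGroup (Q n)] [∀ n, Module k (Q n)] (O : NSOperad k Q)
    (π : Q 1) (hπ : O.IsMult π) {m n : ℕ} (f : Q m) (g : Q n) :
    (O.Dop π (O.cupBracket π f g) =
      tr (by omega : m + 1 + n + 1 = m + n + 1 + 1) (O.cupBracket π (O.Dop π f) g) +
        ((-1 : k) ^ (m + 1)) •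
          tr (by omega : m + (n + 1) + 1 = m + n + 1 + 1) (O.cupBracket π f (O.Dop π g))) ∧
    O.Dop π (O.Dop π f) = 0 := by
  constructor
  · unfold cupBracket
    rw [O.Dop_sub, O.Dop_smul, O.Dop_tr, O.Dop_cup, O.Dop_cup]
    simp only [tr_add' , tr_sub', tr_smul', tr_trans, smul_sub, smul_add, smul_smul, ← pow_add]
    have h1 : ((-1 : k)) ^ ((m + 1 + 1) * (n + 1)) = (-1 : k) ^ ((m + 1) * (n + 1) + (n + 1)) := by
      congr 1; ring
    have h2 : ((-1 : k)) ^ (m + 1 + (m + 1) * (n + 1 + 1)) = (-1 : k) ^ ((m + 1) * (n + 1)) :=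
      neg_one_pow_sub_two_mul _ _ (m + 1) (by ring)
    rw [h1, h2]
    abel
  · exact O.Dop_Dop π hπ f
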